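/- Let S be the unilateral shift on K = ℓ²(ℕ), H₀ = K³. Define H₁ = K⊕0⊕K, H₂ = 0⊕0⊕K, H₁' = K⊕K⊕0, H₂' = 0⊕K⊕0, H₁'' = {(x,x,x)+(y,Sy,0) : x,y ∈ K}, H₂'' = {(x,x,x) : x ∈ K}. If T₀ is a bounded idempotent on H₀ leaving each of these six subspaces invariant, then T₀ = 0 or T₀ = I. -/

import Mathlib

noncomputable section
open scoped ENNReal

local notation "K2" => lp (fun _ : ℕ => ℂ) 2
local notation "H0" => PiLp 2 (fun _ : Fin 3 => lp (fun _ : ℕ => ℂ) 2)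

/-- evaluation at a coordinate as a continuous linear map on `ℓ²`. -/
private def evalCLM (m : ℕ) : K2 →L[ℂ] ℂ :=
  LinearMap.mkContinuous
    { toFun := fun f => f m
      map_add' := fun f g => by simp [lp.coeFn_add]
      map_smul' := fun c f => by simp [lp.coeFn_smul] }
    1 (fun f => by
      show ‖f m‖ ≤ 1 * ‖f‖
      simpa using lp.norm_apply_le_norm (by norm_num : (2 : ℝ≥0∞) ≠ 0) f m)

@[simp] private lemma evalCLM_apply (m : ℕ) (f : K2) : evalCLM m f = f m := rfl

/-- plain inclusion of a coordinate. -/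
private def inclF (i : Fin 3) (x : K2) : H0 := WithLp.toLp 2 (Pi.single i x)

private lemma inclF_apply (i : Fin 3) (x : K2) (j : Fin 3) :
    (inclF i x) j = if j = i then x else 0 :=
  Pi.single_apply i x j

private lemma inclF_zero (i : Fin 3) : inclF i (0 : K2) = 0 :=
  by rw [inclF, Pi.single_zero]; rfl

private lemma sum_inclF_apply0 (a b c : K2) :
    (inclF 0 a + inclF 1 b + inclF 2 c : H0) 0 = a := by
  rw [PiLp.add_apply, PiLp.add_apply, inclF_apply, inclF_apply, inclF_apply,
    if_pos rfl, if_neg (by decide), if_neg (by decide), add_zero, add_zero]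

private lemma sum_inclF_apply1 (a b c : K2) :
    (inclF 0 a + inclF 1 b + inclF 2 c : H0) 1 = b := by
  rw [PiLp.add_apply, PiLp.add_apply, inclF_apply, inclF_apply, inclF_apply,
    if_neg (by decide), if_pos rfl, if_neg (by decide), zero_add, add_zero]

private lemma sum_inclF_apply2 (a b c : K2) :
    (inclF 0 a + inclF 1 b + inclF 2 c : H0) 2 = c := by
  rw [PiLp.add_apply, PiLp.add_apply, inclF_apply, inclF_apply, inclF_apply,
    if_neg (by decide), if_neg (by decide), if_pos rfl, zero_add, zero_add]

/-- inclusion into coordinate 0 of the ℓ²-direct sum of three copies,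
as a continuous linear map. -/
private def inclCLM : K2 →L[ℂ] H0 :=
  { toLinearMap := (WithLp.linearEquiv 2 ℂ (∀ _ : Fin 3, K2)).symm.toLinearMap ∘ₗ
      LinearMap.single ℂ (fun _ : Fin 3 => K2) 0
    cont := by
      have : Continuous fun x : K2 => (Pi.single (0 : Fin 3) x : ∀ _ : Fin 3, K2) := by
        refine continuous_pi fun j => ?_
        by_cases h : j = 0 <;> simp only [Pi.single_apply, h, if_true, if_false]
        · exact continuous_id
        · exact continuous_const
      exact (PiLp.continuous_toLp 2 _).comp this }

private def projCLM : H0 →L[ℂ] K2 := PiLp.proj 2 (fun _ : Fin 3 => lp (fun _ : ℕ => ℂ) 2) 0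

/-- basis vectors of `ℓ²`. -/
private def eB (n : ℕ) : K2 := lp.single 2 n (1 : ℂ)

private lemma eB_apply (n m : ℕ) : eB n m = if m = n then (1 : ℂ) else 0 := by
  by_cases h : m = n
  · subst h; rw [if_pos rfl]; exact lp.single_apply_self 2 m 1
  · rw [if_neg h]; exact lp.single_apply_ne 2 n 1 h

private lemma single_eq_smul_eB (n : ℕ) (c : ℂ) : lp.single 2 n c = c • eB n := by
  rw [eB, ← lp.single_smul, smul_eq_mul, mul_one]

private lemma conv_dichotomy (a : ℕ → ℂ)
    (h : ∀ m, a m = ∑ n ∈ Finset.range (m + 1), a n * a (m - n)) :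
    (∀ m, a m = 0) ∨ (a 0 = 1 ∧ ∀ m, a (m + 1) = 0) := by
  have h0 : a 0 = a 0 * a 0 := by simpa using h 0
  have h0' : a 0 = 0 ∨ a 0 = 1 := by
    rcases mul_eq_zero.mp (show a 0 * (a 0 - 1) = 0 by linear_combination -h0) with h' | h'
    · exact Or.inl h'
    · exact Or.inr (by linear_combination h')
  rcases h0' with hz | ho
  · left
    intro m
    induction m using Nat.strong_induction_on with
    | _ m ih =>
      rw [h m]
      apply Finset.sum_eq_zero
      intro n hn
      rw [Finset.mem_range] at hn
      rcases Nat.eq_zero_or_pos n with h' | h'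
      · rw [h', hz, zero_mul]
      · rw [ih (m - n) (by omega), mul_zero]
  · right
    refine ⟨ho, ?_⟩
    have claim : ∀ m, 0 < m → a m = 0 := by
      intro m
      induction m using Nat.strong_induction_on with
      | _ m ih =>
        intro hm
        have hsum : ∀ n ∈ Finset.range (m + 1),
            a n * a (m - n) = (if n = 0 then a m else 0) + (if n = m then a m else 0) := by
          intro n hn
          rw [Finset.mem_range] at hn
          by_cases hn0 : n = 0
          · subst hn0
            rw [if_pos rfl, if_neg (by omega : ¬ ((0:ℕ) = m)), ho, one_mul, Nat.sub_zero,
              add_zero]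
          · by_cases hnm : n = m
            · subst hnm
              simp [ho, hn0]
            · rw [ih n (by omega) (by omega), zero_mul, if_neg hn0, if_neg hnm, add_zero]
        have hs : (∑ n ∈ Finset.range (m + 1), a n * a (m - n)) = a m + a m := by
          rw [Finset.sum_congr rfl hsum, Finset.sum_add_distrib,
            Finset.sum_ite_eq' _ 0 (fun _ => a m), Finset.sum_ite_eq' _ m (fun _ => a m),
            if_pos (Finset.mem_range.mpr (by omega : 0 < m + 1)),
            if_pos (Finset.mem_range.mpr (by omega : m < m + 1))]
        have h2 : a m = a m + a m := (h m).trans hs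
        linear_combination -h2
    exact fun m => claim (m + 1) m.succ_pos

/-- Let `S` be the unilateral shift on `K = ℓ²(ℕ)` and `H₀ = K ⊕₂ K ⊕₂ K`.
If a bounded idempotent `T₀` on `H₀` leaves the six subspaces
`H₁ = K⊕0⊕K`, `H₂ = 0⊕0⊕K`, `H₁' = K⊕K⊕0`, `H₂' = 0⊕K⊕0`,
`H₁'' = {(x,x,x)+(y,Sy,0)}`, `H₂'' = {(x,x,x)}` invariant, then `T₀ = 0` or `T₀ = I`. -/
theorem idempotent_preserving_E6_subspaces
    (S : lp (fun _ : ℕ => ℂ) 2 →L[ℂ] lp (fun _ : ℕ => ℂ) 2)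
    (hS0 : ∀ x : lp (fun _ : ℕ => ℂ) 2, S x 0 = 0)
    (hS : ∀ (x : lp (fun _ : ℕ => ℂ) 2) (n : ℕ), S x (n + 1) = x n)
    (T₀ : PiLp 2 (fun _ : Fin 3 => lp (fun _ : ℕ => ℂ) 2)
        →L[ℂ] PiLp 2 (fun _ : Fin 3 => lp (fun _ : ℕ => ℂ) 2))
    (hidem : T₀.comp T₀ = T₀)
    (h1 : Set.MapsTo T₀ {w | w 1 = 0} {w | w 1 = 0})
    (h2 : Set.MapsTo T₀ {w | w 0 = 0 ∧ w 1 = 0} {w | w 0 = 0 ∧ w 1 = 0})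
    (h1' : Set.MapsTo T₀ {w | w 2 = 0} {w | w 2 = 0})
    (h2' : Set.MapsTo T₀ {w | w 0 = 0 ∧ w 2 = 0} {w | w 0 = 0 ∧ w 2 = 0})
    (h1'' : Set.MapsTo T₀ {w | ∃ x y, w 0 = x + y ∧ w 1 = x + S y ∧ w 2 = x}
        {w | ∃ x y, w 0 = x + y ∧ w 1 = x + S y ∧ w 2 = x})
    (h2'' : Set.MapsTo T₀ {w | ∃ x, w 0 = x ∧ w 1 = x ∧ w 2 = x}
        {w | ∃ x, w 0 = x ∧ w 1 = x ∧ w 2 = x}) :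
    T₀ = 0 ∨ T₀ = ContinuousLinearMap.id ℂ (PiLp 2 (fun _ : Fin 3 => lp (fun _ : ℕ => ℂ) 2)) := by
  classical
  set P : K2 →L[ℂ] K2 := projCLM.comp (T₀.comp inclCLM) with hPdef
  have hPapp : ∀ x : K2, P x = (T₀ (inclF 0 x)) 0 := fun x => rfl
  -- T₀ preserves coordinate 0
  have key0 : ∀ x : K2, T₀ (inclF 0 x) = inclF 0 (P x) := by
    intro x
    have m1 : (T₀ (inclF 0 x)) 1 = 0 :=
      h1 (show (inclF 0 x) 1 = 0 by rw [inclF_apply, if_neg (by decide)])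
    have m2 : (T₀ (inclF 0 x)) 2 = 0 :=
      h1' (show (inclF 0 x) 2 = 0 by rw [inclF_apply, if_neg (by decide)])
    refine WithLp.ofLp_injective 2 (funext fun j => ?_)
    fin_cases j
    · rw [inclF_apply, if_pos (by decide)]
      exact (hPapp x).symm
    · rw [inclF_apply, if_neg (by decide)]
      exact m1
    · rw [inclF_apply, if_neg (by decide)]
      exact m2
  -- T₀ preserves coordinate 1
  have key1 : ∀ x : K2, T₀ (inclF 1 x) = inclF 1 ((T₀ (inclF 1 x)) 1) := by
    intro x
    have hm := h2' (show (inclF 1 x) 0 = 0 ∧ (inclF 1 x) 2 = 0 from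
      ⟨by rw [inclF_apply, if_neg (by decide)], by rw [inclF_apply, if_neg (by decide)]⟩)
    refine WithLp.ofLp_injective 2 (funext fun j => ?_)
    fin_cases j
    · rw [inclF_apply, if_neg (by decide)]
      exact hm.1
    · rw [inclF_apply, if_pos (by decide)]
      rfl
    · rw [inclF_apply, if_neg (by decide)]
      exact hm.2
  -- T₀ preserves coordinate 2
  have key2 : ∀ x : K2, T₀ (inclF 2 x) = inclF 2 ((T₀ (inclF 2 x)) 2) := by
    intro x
    have hm := h2 (show (inclF 2 x) 0 = 0 ∧ (inclF 2 x) 1 = 0 from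
      ⟨by rw [inclF_apply, if_neg (by decide)], by rw [inclF_apply, if_neg (by decide)]⟩)
    refine WithLp.ofLp_injective 2 (funext fun j => ?_)
    fin_cases j
    · rw [inclF_apply, if_neg (by decide)]
      exact hm.1
    · rw [inclF_apply, if_neg (by decide)]
      exact hm.2
    · rw [inclF_apply, if_pos (by decide)]
      rfl
  -- decomposition of a vector into its three coordinates
  have hdecomp : ∀ w : H0, inclF 0 (w 0) + inclF 1 (w 1) + inclF 2 (w 2) = w := by
    intro w
    refine WithLp.ofLp_injective 2 (funext fun j => ?_)
    fin_cases j
    · exact sum_inclF_apply0 _ _ _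
    · exact sum_inclF_apply1 _ _ _
    · exact sum_inclF_apply2 _ _ _
  -- the diagonal forces all three diagonal blocks to coincide
  have hQR : ∀ x : K2, (T₀ (inclF 1 x)) 1 = P x ∧ (T₀ (inclF 2 x)) 2 = P x := by
    intro x
    obtain ⟨u, hu0, hu1, hu2⟩ :=
      h2'' (show ∃ y, (inclF 0 x + inclF 1 x + inclF 2 x : H0) 0 = y ∧
          (inclF 0 x + inclF 1 x + inclF 2 x : H0) 1 = y ∧
          (inclF 0 x + inclF 1 x + inclF 2 x : H0) 2 = y from
        ⟨x, sum_inclF_apply0 _ _ _, sum_inclF_apply1 _ _ _, sum_inclF_apply2 _ _ _⟩)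
    rw [map_add, map_add, key0, key1, key2, sum_inclF_apply0] at hu0
    rw [map_add, map_add, key0, key1, key2, sum_inclF_apply1] at hu1
    rw [map_add, map_add, key0, key1, key2, sum_inclF_apply2] at hu2
    exact ⟨hu1.trans hu0.symm, hu2.trans hu0.symm⟩
  -- the global form of T₀
  have hT : ∀ w : H0, T₀ w = inclF 0 (P (w 0)) + inclF 1 (P (w 1)) + inclF 2 (P (w 2)) := by
    intro w
    conv_lhs => rw [← hdecomp w]
    rw [map_add, map_add, key0, key1, key2, (hQR (w 1)).1, (hQR (w 2)).2]
  have hT0 : ∀ w : H0, (T₀ w) 0 = P (w 0) := fun w => by rw [hT w, sum_inclF_apply0]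
  have hT1 : ∀ w : H0, (T₀ w) 1 = P (w 1) := fun w => by rw [hT w, sum_inclF_apply1]
  have hT2 : ∀ w : H0, (T₀ w) 2 = P (w 2) := fun w => by rw [hT w, sum_inclF_apply2]
  -- P is idempotent
  have hPP : ∀ x : K2, P (P x) = P x := by
    intro x
    have h := congrArg (fun Q : H0 →L[ℂ] H0 => (Q (inclF 0 x)) 0) hidem
    simp only [ContinuousLinearMap.comp_apply] at h
    rw [key0 x, key0 (P x), inclF_apply, if_pos rfl] at h
    exact h.trans (hPapp x).symm
  -- P commutes with the shift
  have hPS : ∀ y : K2, P (S y) = S (P y) := by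
    intro y
    obtain ⟨x', y', e0, e1, e2⟩ :=
      h1'' (show ∃ a b, (inclF 0 y + inclF 1 (S y) + inclF 2 0 : H0) 0 = a + b ∧
          (inclF 0 y + inclF 1 (S y) + inclF 2 0 : H0) 1 = a + S b ∧
          (inclF 0 y + inclF 1 (S y) + inclF 2 0 : H0) 2 = a from
        ⟨0, y, by rw [sum_inclF_apply0, zero_add], by rw [sum_inclF_apply1, zero_add],
          by rw [sum_inclF_apply2]⟩)
    have c0 : (T₀ (inclF 0 y + inclF 1 (S y) + inclF 2 0 : H0)) 0 = P y := by
      rw [hT0, sum_inclF_apply0]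
    have c1 : (T₀ (inclF 0 y + inclF 1 (S y) + inclF 2 0 : H0)) 1 = P (S y) := by
      rw [hT1, sum_inclF_apply1]
    have c2 : (T₀ (inclF 0 y + inclF 1 (S y) + inclF 2 0 : H0)) 2 = 0 := by
      rw [hT2, sum_inclF_apply2, map_zero]
    rw [c2] at e2
    rw [c0, ← e2, zero_add] at e0
    rw [c1, ← e2, zero_add, ← e0] at e1
    exact e1
  -- powers of the shift, pointwise
  have hSpow : ∀ (n : ℕ) (x : K2) (m : ℕ),
      ((S ^ n) x) m = if n ≤ m then x (m - n) else 0 := by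
    intro n
    induction n with
    | zero => intro x m; simp
    | succ n ih =>
      intro x m
      have hstep : (S ^ (n + 1)) x = S ((S ^ n) x) := by rw [pow_succ']; rfl
      rw [hstep]
      cases m with
      | zero => rw [hS0, if_neg (by omega)]
      | succ m =>
        rw [hS ((S ^ n) x) m, ih x m]
        by_cases hnm : n ≤ m
        · rw [if_pos hnm, if_pos (by omega : n + 1 ≤ m + 1),
            show m + 1 - (n + 1) = m - n from by omega]
        · rw [if_neg hnm, if_neg (by omega)]
  -- basis vectors are shifted around
  have heS : ∀ n : ℕ, (S ^ n) (eB 0) = eB n := by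
    intro n
    apply lp.ext
    funext m
    rw [hSpow n (eB 0) m, eB_apply n m]
    by_cases h : n ≤ m
    · rw [if_pos h, eB_apply 0 (m - n)]
      by_cases h2 : m = n
      · rw [if_pos (by omega), if_pos h2]
      · rw [if_neg (by omega), if_neg h2]
    · rw [if_neg h, if_neg (by omega)]
  -- P commutes with powers of the shift
  have hPSn : ∀ (n : ℕ) (y : K2), P ((S ^ n) y) = (S ^ n) (P y) := by
    intro n
    induction n with
    | zero => intro y; simp
    | succ n ih =>
      intro y
      have hstep : ∀ z : K2, (S ^ (n + 1)) z = S ((S ^ n) z) := fun z => by rw [pow_succ']; rfl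
      rw [hstep, hPS, ih, hstep]
  -- the symbol of P
  set v : K2 := P (eB 0) with hv
  have hPfix : P v = v := hPP (eB 0)
  have hPe : ∀ n : ℕ, P (eB n) = (S ^ n) v := by
    intro n
    rw [← heS n, hPSn n (eB 0), ← hv]
  -- expansion of P through its symbol
  have hG : ∀ x : K2, HasSum (fun n => x n • ((S ^ n) v)) (P x) := by
    intro x
    have h0 := lp.hasSum_single (E := fun _ : ℕ => ℂ) (p := 2) (by norm_num) x
    have h1s := h0.mapL P
    have hterm : (fun n => P (lp.single 2 n (x n))) = fun n => x n • ((S ^ n) v) := by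
      funext n
      rw [single_eq_smul_eB, map_smul, hPe]
    rwa [hterm] at h1s
  -- the convolution identity for the symbol
  have hconv : ∀ m, v m = ∑ n ∈ Finset.range (m + 1), v n * v (m - n) := by
    intro m
    have hGv := hG v
    rw [hPfix] at hGv
    have h2s := hGv.mapL (evalCLM m)
    have hterm : (fun n => evalCLM m (v n • (S ^ n) v)) = fun n => v n * ((S ^ n) v) m := by
      funext n
      rw [map_smul, smul_eq_mul, evalCLM_apply]
    rw [hterm] at h2s
    have hfin : HasSum (fun n => v n * ((S ^ n) v) m)
        (∑ n ∈ Finset.range (m + 1), v n * ((S ^ n) v) m) := by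
      apply hasSum_sum_of_ne_finset_zero
      intro n hn
      rw [Finset.mem_range, not_lt] at hn
      rw [hSpow, if_neg (by omega), mul_zero]
    have huniq := h2s.unique hfin
    rw [evalCLM_apply] at huniq
    rw [huniq]
    refine Finset.sum_congr rfl fun n hn => ?_
    rw [Finset.mem_range] at hn
    rw [hSpow, if_pos (by omega)]
  -- dichotomy for the symbol
  rcases conv_dichotomy (fun m => v m) hconv with hcase | hcase
  · -- v = 0, hence T₀ = 0
    left
    have hv0 : v = 0 := by
      apply lp.ext
      funext m
      simp [hcase m]
    have hPzero : ∀ x : K2, P x = 0 := by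
      intro x
      have hGx := hG x
      rw [hv0] at hGx
      have hz : (fun n => x n • ((S ^ n) (0 : K2))) = fun _ => (0 : K2) :=
        funext fun n => by rw [map_zero, smul_zero]
      rw [hz] at hGx
      exact hGx.unique hasSum_zero
    apply ContinuousLinearMap.ext
    intro w
    rw [ContinuousLinearMap.zero_apply, hT w, hPzero, hPzero, hPzero, inclF_zero, inclF_zero,
      inclF_zero, add_zero, add_zero]
  · -- v = e₀, hence T₀ = I
    right
    have hve : v = eB 0 := by
      apply lp.ext
      funext m
      cases m with
      | zero => rw [hcase.1, eB_apply, if_pos rfl]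
      | succ m => rw [hcase.2 m, eB_apply, if_neg (by omega)]
    have hPid : ∀ x : K2, P x = x := by
      intro x
      have hGx := hG x
      have hterm : (fun n => x n • ((S ^ n) v)) = fun n => lp.single 2 n (x n) := by
        funext n
        rw [hve, heS n, single_eq_smul_eB]
      rw [hterm] at hGx
      exact hGx.unique (lp.hasSum_single (by norm_num) x)
    apply ContinuousLinearMap.ext
    intro w
    rw [ContinuousLinearMap.id_apply, hT w, hPid, hPid, hPid, hdecomp w]
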